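/- arXiv:2502.00650 — 4 statements merged into one kernel-verified Lean document; each statement's English description precedes it below -/
import Mathlib

section
/- Let X be a topological space covered by finitely many open sets B₁, …, Bₙ such that X = ⋃ Bᵢ, each Bᵢ is simply connected, each nonempty pairwise intersection Bᵢ ∩ Bⱼ is path-connected, and X is path-connected. Then the fundamental group of X is finitely generated. -/
open CategoryTheory Set unitInterval

set_option linter.unusedSectionVars false

namespace GoodCoverFG


attribute [local instance] Path.Homotopic.setoid
attribute [local instance] Classical.propDecidable

variable {X : Type*} [TopologicalSpace X]

lemma path_cast_rfl_rfl {x y : X} (p : Path x y) : p.cast rfl rfl = p := by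
  ext t
  rfl


lemma homotopic_cast {x y x' y' : X} {p q : Path x y} (h : p.Homotopic q)
    (hx : x' = x) (hy : y' = y) : (p.cast hx hy).Homotopic (q.cast hx hy) := by
  subst hx; subst hy
  rwa [path_cast_rfl_rfl, path_cast_rfl_rfl]

lemma trans_cast {x y z z' : X} (p : Path x y) (q : Path y z) (hz : z' = z) :
    (p.trans q).cast rfl hz = p.trans (q.cast rfl hz) := by
  ext s
  show (p.trans q) s = _
  rw [Path.trans_apply, Path.trans_apply]
  split_ifs <;> rfl

lemma range_cast {x y x' y' : X} (p : Path x y) (hx : x' = x) (hy : y' = y) :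
    Set.range (p.cast hx hy) = Set.range p := by
  rw [Path.cast_coe]

/-- The homotopy class of a path, as a morphism of the fundamental groupoid. -/
noncomputable def homQ {x y : X} (p : Path x y) :
    FundamentalGroupoid.mk x ⟶ FundamentalGroupoid.mk y := ⟦p⟧

lemma homQ_eq_of_homotopic {x y : X} {p q : Path x y} (h : p.Homotopic q) : homQ p = homQ q :=
  Quotient.sound h

lemma homQ_trans {x y z : X} (p : Path x y) (q : Path y z) :
    homQ (p.trans q) = homQ p ≫ homQ q := by
  rw [FundamentalGroupoid.comp_eq]
  rfl

lemma homQ_symm {x y : X} (p : Path x y) :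
    homQ p.symm = CategoryTheory.Groupoid.inv (homQ p) := rfl

lemma homQ_refl (x : X) : homQ (Path.refl x) = 𝟙 (FundamentalGroupoid.mk x) := rfl

lemma homQ_cast {x y x' y' : X} (p : Path x y) (hx : x' = x) (hy : y' = y) :
    homQ (p.cast hx hy) =
      eqToHom (congrArg FundamentalGroupoid.mk hx) ≫ homQ p ≫
        eqToHom (congrArg FundamentalGroupoid.mk hy).symm := by
  subst hx; subst hy
  simp [path_cast_rfl_rfl]

/-- A loop class as an element of the fundamental group. -/
noncomputable def loopAut (a : X) (h : FundamentalGroupoid.mk a ⟶ FundamentalGroupoid.mk a) :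
    FundamentalGroup X a :=
  h

lemma loopAut_comp (a : X) (h₁ h₂ : FundamentalGroupoid.mk a ⟶ FundamentalGroupoid.mk a) :
    loopAut a (h₁ ≫ h₂) = loopAut a h₂ * loopAut a h₁ :=
  rfl

lemma loopAut_inv (a : X) (h : FundamentalGroupoid.mk a ⟶ FundamentalGroupoid.mk a) :
    loopAut a (CategoryTheory.Groupoid.inv h) = (loopAut a h)⁻¹ :=
  rfl

lemma loopAut_surjective (a : X) (g : FundamentalGroup X a) :
    ∃ p : Path a a, loopAut a (homQ p) = g := by
  obtain ⟨p, hp⟩ := Quotient.exists_rep (s := Path.Homotopic.setoid a a) g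
  exact ⟨p, hp⟩

/-- Two paths with range inside a simply connected subset are homotopic. -/
lemma homotopic_of_range_subset {U : Set X} (hU : SimplyConnectedSpace U) {x y : X}
    (p q : Path x y) (hp : range p ⊆ U) (hq : range q ⊆ U) : p.Homotopic q := by
  have hx : x ∈ U := by have := hp (mem_range_self 0); rwa [p.source] at this
  have hy : y ∈ U := by have := hp (mem_range_self 1); rwa [p.target] at this
  let p' : Path (⟨x, hx⟩ : U) ⟨y, hy⟩ :=
    { toFun := fun t => ⟨p t, hp (mem_range_self t)⟩
      continuous_toFun := Continuous.subtype_mk p.continuous _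
      source' := Subtype.ext p.source
      target' := Subtype.ext p.target }
  let q' : Path (⟨x, hx⟩ : U) ⟨y, hy⟩ :=
    { toFun := fun t => ⟨q t, hq (mem_range_self t)⟩
      continuous_toFun := Continuous.subtype_mk q.continuous _
      source' := Subtype.ext q.source
      target' := Subtype.ext q.target }
  have h : p'.Homotopic q' := SimplyConnectedSpace.paths_homotopic p' q'
  have h2 := h.map (f := ⟨Subtype.val, continuous_subtype_val⟩)
  have e1 : p'.map continuous_subtype_val = p := by ext t; rfl
  have e2 : q'.map continuous_subtype_val = q := by ext t; rfl
  rwa [e1, e2] at h2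



variable {X : Type*} [TopologicalSpace X]

/-- Splitting a truncated path at an intermediate time, up to homotopy. -/
lemma trunc_split {x y : X} (γ : Path x y) {t₀ u t₁ : ℝ}
    (h0 : 0 ≤ t₀) (h01 : t₀ ≤ u) (h12 : u ≤ t₁) (h1 : t₁ ≤ 1) :
    (γ.truncateOfLE (h01.trans h12)).Homotopic
      ((γ.truncateOfLE h01).trans (γ.truncateOfLE h12)) := by
  have hu0 : (0:ℝ) ≤ u := h0.trans h01
  have hu1 : u ≤ 1 := h12.trans h1
  have hmem : ∀ s : I, (if (s:ℝ) ≤ 1/2 then min (2*(s:ℝ)) u else max (2*(s:ℝ)-1) u) ∈ I := by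
    intro s
    rcases le_or_gt (s:ℝ) (1/2) with h | h
    · rw [if_pos h]
      exact ⟨le_min (by have := s.2.1; linarith) hu0, min_le_of_right_le hu1⟩
    · rw [if_neg (not_le.2 h)]
      exact ⟨le_max_of_le_right hu0, max_le (by have := s.2.2; linarith) hu1⟩
  set f : I → I := fun s =>
    ⟨if (s:ℝ) ≤ 1/2 then min (2*(s:ℝ)) u else max (2*(s:ℝ)-1) u, hmem s⟩ with hf_def
  have hfs_pos : ∀ s : I, (s:ℝ) ≤ 1/2 → (f s : ℝ) = min (2*(s:ℝ)) u := by
    intro s h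
    simp only [hf_def]
    rw [if_pos h]
  have hfs_neg : ∀ s : I, ¬((s:ℝ) ≤ 1/2) → (f s : ℝ) = max (2*(s:ℝ)-1) u := by
    intro s h
    simp only [hf_def]
    rw [if_neg h]
  have hfc : Continuous f := by
    apply Continuous.subtype_mk
    apply Continuous.if_le
    · exact (continuous_const.mul continuous_subtype_val).min continuous_const
    · exact ((continuous_const.mul continuous_subtype_val).sub continuous_const).max
        continuous_const
    · exact continuous_subtype_val
    · exact continuous_const
    · intro s hs
      rw [hs]
      have e1 : (2:ℝ) * (1/2) = 1 := by norm_num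
      have e2 : (2:ℝ) * (1/2) - 1 = 0 := by norm_num
      norm_num [min_eq_right hu1, max_eq_right hu0]
  have hf0 : f 0 = 0 := by
    apply Subtype.ext
    rw [hfs_pos 0 (by norm_num)]
    show min (2*(0:ℝ)) u = 0
    rw [mul_zero, min_eq_left hu0]
  have hf1 : f 1 = 1 := by
    apply Subtype.ext
    rw [hfs_neg 1 (by norm_num)]
    show max (2*(1:ℝ)-1) u = 1
    rw [mul_one]
    norm_num
    exact hu1
  have key : (γ.truncateOfLE h01).trans (γ.truncateOfLE h12) =
      (γ.truncateOfLE (h01.trans h12)).reparam f hfc hf0 hf1 := by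
    ext s
    rw [Path.coe_reparam]
    show _ = (γ.truncateOfLE (h01.trans h12)) (f s)
    have RHSval : (γ.truncateOfLE (h01.trans h12)) (f s)
        = γ.extend (min (max ((f s : ℝ)) t₀) t₁) := rfl
    rw [RHSval, Path.trans_apply]
    split_ifs with h
    · show γ.extend (min (max (2*(s:ℝ)) t₀) u) = _
      rw [hfs_pos s h]
      congr 1
      simp only [min_def, max_def]
      split_ifs <;> linarith
    · show γ.extend (min (max (2*(s:ℝ)-1) u) t₁) = _
      rw [hfs_neg s h]
      congr 1
      simp only [min_def, max_def]
      split_ifs <;> linarith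
  rw [key]
  exact ⟨Path.Homotopy.reparam _ f hfc hf0 hf1⟩



attribute [local instance] Path.Homotopic.setoid

variable {X : Type*} [TopologicalSpace X]

section Defs

variable {n : ℕ} [PathConnectedSpace X] (B : Fin n → Set X) (a : X)

/-- A chosen point in `B i ∩ B j` (or `a` as junk value). -/
noncomputable def qpt (i j : Fin n) : X :=
  if h : (B i ∩ B j).Nonempty then h.choose else a

lemma qpt_mem {i j : Fin n} (h : (B i ∩ B j).Nonempty) : qpt B a i j ∈ B i ∩ B j := by
  rw [qpt, dif_pos h]
  exact h.choose_spec

/-- A chosen path from the basepoint to `qpt i j`. -/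
noncomputable def cpath (i j : Fin n) : Path a (qpt B a i j) :=
  PathConnectedSpace.somePath a _

/-- A chosen path from `qpt j i` to `qpt i k` inside `B i` (when possible). -/
noncomputable def sig (i j k : Fin n) : Path (qpt B a j i) (qpt B a i k) :=
  if h : (B j ∩ B i).Nonempty ∧ (B i ∩ B k).Nonempty ∧ IsPathConnected (B i) then
    (h.2.2.joinedIn _ (qpt_mem B a h.1).2 _ (qpt_mem B a h.2.1).1).somePath
  else PathConnectedSpace.somePath _ _

lemma sig_range {i j k : Fin n}
    (h : (B j ∩ B i).Nonempty ∧ (B i ∩ B k).Nonempty ∧ IsPathConnected (B i)) :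
    range (sig B a i j k) ⊆ B i := by
  rw [sig, dif_pos h]
  rintro x ⟨s, rfl⟩
  exact JoinedIn.somePath_mem _ s

/-- A chosen path from the basepoint to `qpt j i` inside `B i` (when possible). -/
noncomputable def spath (i j : Fin n) : Path a (qpt B a j i) :=
  if h : a ∈ B i ∧ (B j ∩ B i).Nonempty ∧ IsPathConnected (B i) then
    (h.2.2.joinedIn a h.1 _ (qpt_mem B a h.2.1).2).somePath
  else PathConnectedSpace.somePath _ _

lemma spath_range {i j : Fin n}
    (h : a ∈ B i ∧ (B j ∩ B i).Nonempty ∧ IsPathConnected (B i)) :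
    range (spath B a i j) ⊆ B i := by
  rw [spath, dif_pos h]
  rintro x ⟨s, rfl⟩
  exact JoinedIn.somePath_mem _ s

/-- The triple generators. -/
noncomputable def genH (i j k : Fin n) :
    FundamentalGroupoid.mk a ⟶ FundamentalGroupoid.mk a :=
  homQ (cpath B a j i) ≫ homQ (sig B a i j k) ≫ Groupoid.inv (homQ (cpath B a i k))

/-- The starting generators. -/
noncomputable def gstartH (i j : Fin n) :
    FundamentalGroupoid.mk a ⟶ FundamentalGroupoid.mk a :=
  homQ (spath B a i j) ≫ Groupoid.inv (homQ (cpath B a j i))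

/-- The generating set. -/
noncomputable def gens : Set (FundamentalGroup X a) :=
  (range fun p : Fin n × Fin n × Fin n => loopAut a (genH B a p.1 p.2.1 p.2.2)) ∪
    (range fun p : Fin n × Fin n => loopAut a (gstartH B a p.1 p.2))

lemma gens_finite : (gens B a).Finite :=
  (finite_range _).union (finite_range _)

lemma genH_mem (i j k : Fin n) : loopAut a (genH B a i j k) ∈ gens B a :=
  Or.inl ⟨(i, j, k), rfl⟩

lemma gstartH_mem (i j : Fin n) : loopAut a (gstartH B a i j) ∈ gens B a :=
  Or.inr ⟨(i, j), rfl⟩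

lemma base_shape {i j : Fin n} (ha : a ∈ B i) (hne : (B j ∩ B i).Nonempty)
    (hpc : IsPathConnected (B i)) (hscI : SimplyConnectedSpace (B i))
    (f : Path (qpt B a j i) a) (hf : range f ⊆ B i) :
    homQ (cpath B a j i) ≫ homQ f = Groupoid.inv (gstartH B a i j) := by
  have h1 : f.Homotopic (spath B a i j).symm := by
    apply homotopic_of_range_subset hscI _ _ hf
    rw [Path.symm_range]
    exact spath_range B a ⟨ha, hne, hpc⟩
  rw [homQ_eq_of_homotopic h1, homQ_symm, gstartH]
  simp [Groupoid.inv_eq_inv]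

end Defs


end GoodCoverFG
open CategoryTheory Set unitInterval GoodCoverFG in
set_option maxHeartbeats 1000000 in
/-- If a path-connected space `X` is covered by finitely many open,
simply connected sets whose pairwise nonempty intersections are
path-connected, then the fundamental group of `X` is finitely generated. -/
theorem fundamentalGroup_fg_of_finite_good_cover {X : Type*} [TopologicalSpace X]
    [PathConnectedSpace X] (n : ℕ) (B : Fin n → Set X)
    (hopen : ∀ i, IsOpen (B i))
    (hcover : ⋃ i, B i = Set.univ)
    (hsc : ∀ i, SimplyConnectedSpace (B i))
    (hij : ∀ i j, (B i ∩ B j).Nonempty → IsPathConnected (B i ∩ B j))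
    (a : X) :
    Group.FG (FundamentalGroup X a) := by
  have hpc : ∀ i, IsPathConnected (B i) := by
    intro i
    haveI := hsc i
    rw [isPathConnected_iff_pathConnectedSpace]
    infer_instance
  rw [Group.fg_iff]
  refine ⟨gens B a, ?_, gens_finite B a⟩
  rw [Subgroup.eq_top_iff']
  intro g
  obtain ⟨γ, rfl⟩ := loopAut_surjective a g
  -- subdivide the loop
  have hc1 : ∀ i, IsOpen ((γ : I → X) ⁻¹' (B i)) := fun i => (hopen i).preimage γ.continuous
  have hc2 : univ ⊆ ⋃ i, (γ : I → X) ⁻¹' (B i) := by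
    intro s _
    have : γ s ∈ ⋃ i, B i := by rw [hcover]; trivial
    simpa using this
  obtain ⟨t, ht0, hmono, ⟨N, htN⟩, hsub⟩ :=
    exists_monotone_Icc_subset_open_cover_unitInterval hc1 hc2
  choose idx hidx using hsub
  set y : ℕ → X := fun k => γ.extend (t k) with hy
  have hyval : ∀ k, y k = γ (t k) := fun k => γ.extend_extends' (t k)
  have hyB : ∀ k, y k ∈ B (idx k) := by
    intro k
    rw [hyval k]
    exact hidx k ⟨le_rfl, hmono (Nat.le_succ k)⟩
  have hyB' : ∀ k, y (k+1) ∈ B (idx k) := by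
    intro k
    rw [hyval (k+1)]
    exact hidx k ⟨hmono (Nat.le_succ k), le_rfl⟩
  have htkk : ∀ k, ((t k : ℝ)) ≤ ((t (k+1) : ℝ)) := fun k => Subtype.coe_le_coe.mpr
    (hmono (Nat.le_succ k))
  have htk1 : ∀ k, ((t k : ℝ)) ≤ 1 := fun k => (t k).2.2
  set δ : ∀ k : ℕ, Path (y k) (y (k+1)) := fun k => γ.truncateOfLE (htkk k) with hδ
  set tailc : ∀ k : ℕ, Path (y k) a :=
    fun k => (γ.truncateOfLE (htk1 k)).cast rfl γ.extend_one.symm with htailc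
  have hδrange : ∀ k, range (δ k) ⊆ B (idx k) := by
    rintro k x ⟨s, rfl⟩
    have hval : (δ k) s = γ.extend (min (max (s : ℝ) ((t k : ℝ))) ((t (k+1) : ℝ))) := rfl
    set r := min (max (s:ℝ) ((t k : ℝ))) ((t (k+1) : ℝ)) with hr
    have hr1 : (t k : ℝ) ≤ r := le_min (le_max_right _ _) (htkk k)
    have hr2 : r ≤ (t (k+1) : ℝ) := min_le_right _ _
    have hrI : r ∈ I := ⟨(t k).2.1.trans hr1, hr2.trans (t (k+1)).2.2⟩
    rw [hval, γ.extend_apply hrI]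
    exact hidx k (⟨hr1, hr2⟩ : (⟨r, hrI⟩ : I) ∈ Icc (t k) (t (k+1)))
  have htail_split : ∀ k, (tailc k).Homotopic ((δ k).trans (tailc (k+1))) := by
    intro k
    have h := trunc_split γ (t k).2.1 (htkk k) (htk1 (k+1)) le_rfl
    have h2 := homotopic_cast (x' := y k) (y' := a) h rfl γ.extend_one.symm
    rwa [trans_cast] at h2
  have hTsplit : ∀ k, homQ (tailc k) = homQ (δ k) ≫ homQ (tailc (k+1)) := by
    intro k
    rw [← homQ_trans]
    exact homQ_eq_of_homotopic (htail_split k)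
  have htN1 : ((t N : ℝ)) = 1 := by rw [htN N le_rfl]; rfl
  have hyN : y N = a := by
    show γ.extend _ = a
    rw [htN1, γ.extend_one]
  have haN : a ∈ B (idx N) := hyN ▸ hyB N
  have htailN_range : range (tailc N) ⊆ B (idx N) := by
    rintro x ⟨s, rfl⟩
    have hval : (tailc N) s = γ.extend (min (max (s : ℝ) ((t N : ℝ))) 1) := rfl
    rw [hval, htN1, max_eq_right s.2.2, min_self, γ.extend_one]
    exact haN
  -- the main downward induction
  have main : ∀ (d k : ℕ), k + d = N →
      ∀ (j : Fin n), (B j ∩ B (idx k)).Nonempty →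
      ∀ (f : Path (qpt B a j (idx k)) (y k)), range f ⊆ B j ∩ B (idx k) →
      loopAut a (homQ (cpath B a j (idx k)) ≫ (homQ f ≫ homQ (tailc k))) ∈
        Subgroup.closure (gens B a) := by
    intro d
    induction d with
    | zero =>
      intro k hk j hne f hf
      obtain rfl : k = N := by omega
      rw [← homQ_trans,
        base_shape B a haN hne (hpc (idx k)) (hsc (idx k)) (f.trans (tailc k))
          (by rw [Path.trans_range]
              exact union_subset (hf.trans inter_subset_right) htailN_range),
        loopAut_inv]
      exact inv_mem (Subgroup.subset_closure (gstartH_mem B a (idx k) j))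
    | succ d ih =>
      intro k hk j hne f hf
      have hy' : y (k+1) ∈ B (idx k) ∩ B (idx (k+1)) := ⟨hyB' k, hyB (k+1)⟩
      have hne' : (B (idx k) ∩ B (idx (k+1))).Nonempty := ⟨_, hy'⟩
      have hJ : JoinedIn (B (idx k) ∩ B (idx (k+1))) (qpt B a (idx k) (idx (k+1))) (y (k+1)) :=
        (hij (idx k) (idx (k+1)) hne').joinedIn _ (qpt_mem B a hne') _ hy'
      have hf' : range hJ.somePath ⊆ B (idx k) ∩ B (idx (k+1)) := by
        rintro x ⟨s, rfl⟩; exact hJ.somePath_mem s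
      have hmid : ((f.trans (δ k)).trans hJ.somePath.symm).Homotopic
          (sig B a (idx k) j (idx (k+1))) := by
        apply homotopic_of_range_subset (hsc (idx k))
        · rw [Path.trans_range, Path.trans_range, Path.symm_range]
          exact union_subset (union_subset (hf.trans inter_subset_right) (hδrange k))
            (hf'.trans inter_subset_left)
        · exact sig_range B a ⟨hne, hne', hpc (idx k)⟩
      have e2 : (homQ f ≫ homQ (δ k)) ≫ Groupoid.inv (homQ hJ.somePath) =
          homQ (sig B a (idx k) j (idx (k+1))) := by
        rw [← homQ_symm, ← homQ_trans, ← homQ_trans]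
        exact homQ_eq_of_homotopic hmid
      have e3 : homQ (cpath B a j (idx k)) ≫ (homQ f ≫ homQ (tailc k)) =
          genH B a (idx k) j (idx (k+1)) ≫
            (homQ (cpath B a (idx k) (idx (k+1))) ≫
              (homQ hJ.somePath ≫ homQ (tailc (k+1)))) := by
        rw [hTsplit k]
        unfold genH
        rw [← e2]
        simp only [Groupoid.inv_eq_inv, Category.assoc, IsIso.inv_hom_id_assoc,
          IsIso.inv_hom_id, Category.comp_id]
      rw [e3, loopAut_comp]
      exact mul_mem (ih (k+1) (by omega) (idx k) hne' hJ.somePath hf')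
        (Subgroup.subset_closure (genH_mem B a (idx k) j (idx (k+1))))
  -- assemble: relate the original loop to the chain starting at `y 0`
  have hy0 : y 0 = a := by
    show γ.extend _ = a
    rw [ht0]
    exact γ.extend_zero
  have ha0 : a ∈ B (idx 0) := hy0 ▸ hyB 0
  have hmem0 : y 0 ∈ B (idx 0) ∩ B (idx 0) := ⟨hyB 0, hyB 0⟩
  have hne0 : (B (idx 0) ∩ B (idx 0)).Nonempty := ⟨_, hmem0⟩
  have hJ0 : JoinedIn (B (idx 0) ∩ B (idx 0)) (qpt B a (idx 0) (idx 0)) (y 0) :=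
    (hij (idx 0) (idx 0) hne0).joinedIn _ (qpt_mem B a hne0) _ hmem0
  have hf₀ : range hJ0.somePath ⊆ B (idx 0) ∩ B (idx 0) := by
    rintro x ⟨s, rfl⟩; exact hJ0.somePath_mem s
  have Q0 := main N 0 (by omega) (idx 0) hne0 hJ0.somePath hf₀
  have hγeq : γ = (tailc 0).cast hy0.symm rfl := by
    ext s
    rw [Path.cast_coe]
    show γ s = γ.extend (min (max (s:ℝ) ((t 0 : ℝ))) 1)
    rw [ht0]
    rw [show (((0:I)):ℝ) = 0 from rfl, max_eq_left s.2.1, min_eq_left s.2.2,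
      γ.extend_extends']
  have hEbase : homQ (cpath B a (idx 0) (idx 0)) ≫ homQ (hJ0.somePath.cast rfl hy0.symm) =
      Groupoid.inv (gstartH B a (idx 0) (idx 0)) :=
    base_shape B a ha0 hne0 (hpc (idx 0)) (hsc (idx 0)) _
      (by rw [range_cast]; exact hf₀.trans inter_subset_left)
  have hsplit0 : homQ (cpath B a (idx 0) (idx 0)) ≫ (homQ hJ0.somePath ≫ homQ (tailc 0)) =
      (homQ (cpath B a (idx 0) (idx 0)) ≫ homQ (hJ0.somePath.cast rfl hy0.symm)) ≫ homQ γ := by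
    rw [hγeq]
    simp only [homQ_cast, eqToHom_refl, Category.id_comp, Category.comp_id, Category.assoc,
      eqToHom_trans_assoc, eqToHom_trans]
  rw [hsplit0, loopAut_comp] at Q0
  have hE : loopAut a (homQ (cpath B a (idx 0) (idx 0)) ≫ homQ (hJ0.somePath.cast rfl hy0.symm))
      ∈ Subgroup.closure (gens B a) := by
    rw [hEbase, loopAut_inv]
    exact inv_mem (Subgroup.subset_closure (gstartH_mem B a (idx 0) (idx 0)))
  have hfin := mul_mem Q0 (inv_mem hE)
  rwa [mul_assoc, mul_inv_cancel, mul_one] at hfin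
end

section
/- Let D ⊆ ℂ be a bounded domain and a ∈ D. If f : D → D is holomorphic with f(a) = a, then |f'(a)| ≤ 1. -/
/-- Cartan–Carathéodory: a holomorphic self-map of a bounded planar domain
with a fixed point `a` satisfies `|f'(a)| ≤ 1`. -/
theorem abs_deriv_le_one (D : Set ℂ) (hO : IsOpen D) (hC : IsConnected D)
    (hB : Bornology.IsBounded D) (f : ℂ → ℂ) (hf : DifferentiableOn ℂ f D)
    (hmap : Set.MapsTo f D D) (a : ℂ) (ha : a ∈ D) (hfa : f a = a) :
    ‖deriv f a‖ ≤ 1 := by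
  obtain ⟨r, hr, hball⟩ := Metric.isOpen_iff.1 hO a ha
  obtain ⟨R, hR⟩ := hB.subset_ball a
  have hR0 : 0 < R := by
    have := hR ha; simpa using Metric.pos_of_mem_ball this
  -- differentiability and fixed point of iterates
  have hdiff : ∀ n, DifferentiableOn ℂ (f^[n]) D := by
    intro n
    induction n with
    | zero => simpa using differentiableOn_id
    | succ n ih =>
      rw [Function.iterate_succ']
      exact hf.comp ih (hmap.iterate n)
  have hfix : ∀ n, f^[n] a = a := fun n => Function.iterate_fixed hfa n
  have hderiv : ∀ n, deriv (f^[n]) a = (deriv f a) ^ n := by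
    intro n
    induction n with
    | zero => simp
    | succ n ih =>
      rw [Function.iterate_succ', pow_succ']
      have h1 : DifferentiableAt ℂ f a := hf.differentiableAt (hO.mem_nhds ha)
      have h2 : DifferentiableAt ℂ (f^[n]) a :=
        (hdiff n).differentiableAt (hO.mem_nhds ha)
      rw [deriv_comp a (by rwa [hfix n]) h2, hfix n, ih]
  -- Schwarz estimate for iterates
  have key : ∀ n, (‖deriv f a‖) ^ n ≤ R / r := by
    intro n
    have hd : DifferentiableOn ℂ (f^[n]) (Metric.ball a r) := (hdiff n).mono hball
    have hm : Set.MapsTo (f^[n]) (Metric.ball a r) (Metric.ball ((f^[n]) a) R) := by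
      rw [hfix n]
      exact fun z hz => hR ((hmap.iterate n) (hball hz))
    have := Complex.norm_deriv_le_div_of_mapsTo_ball hd (hm.mono_right Metric.ball_subset_closedBall) hr
    rwa [hderiv n, norm_pow] at this
  by_contra h
  push_neg at h
  obtain ⟨n, hn⟩ := pow_unbounded_of_one_lt (R / r) h
  exact absurd (key n) (not_le.2 hn)
end

section
/- Let D ⊆ ℂ be a bounded domain and a ∈ D. If f : D → D is holomorphic with f(a) = a and f'(a) = 1, then f is the identity map on D. -/
open Set Metric Filter Topology Nat

/-- Iterated derivatives of `(z - a)^k * g z` near `a`: after `j ≤ k` derivatives we still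
have a factor `(z - a)^(k - j)` times an analytic function whose value at `a` is
`k.descFactorial j * g a`. -/
private lemma descend (a : ℂ) :
    ∀ (j k : ℕ) (g : ℂ → ℂ), j ≤ k → AnalyticAt ℂ g a →
    ∃ h : ℂ → ℂ, AnalyticAt ℂ h a ∧ h a = (k.descFactorial j : ℂ) * g a ∧
      iteratedDeriv j (fun w => (w - a) ^ k * g w) =ᶠ[𝓝 a]
        fun z => (z - a) ^ (k - j) * h z := by
  intro j
  induction j with
  | zero =>
    intro k g _ hg
    exact ⟨g, hg, by simp, by simp [iteratedDeriv_zero]⟩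
  | succ j ih =>
    intro k g hjk hg
    obtain ⟨h, hh, hha, hev⟩ := ih k g (Nat.le_of_succ_le hjk) hg
    obtain ⟨m, hm⟩ : ∃ m, k - j = m + 1 := ⟨k - (j + 1), by omega⟩
    have hdh : AnalyticAt ℂ (deriv h) a :=
      (AnalyticOnNhd.deriv (fun z hz => hz : AnalyticOnNhd ℂ h {z | AnalyticAt ℂ h z})) a hh
    refine ⟨fun z => ((k - j : ℕ) : ℂ) * h z + (z - a) * deriv h z, ?_, ?_, ?_⟩
    · exact (analyticAt_const.mul hh).add
        ((analyticAt_id.sub analyticAt_const).mul hdh)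
    · rw [Nat.descFactorial_succ]
      simp only [hha]
      push_cast
      ring
    · rw [iteratedDeriv_succ]
      refine hev.deriv.trans ?_
      filter_upwards [hh.eventually_analyticAt] with z hz
      have h1 : HasDerivAt (fun w => (w - a) ^ (k - j))
          (((k - j : ℕ) : ℂ) * (z - a) ^ (k - j - 1) * 1) z :=
        ((hasDerivAt_id' (x := z)).sub_const a).pow _
      have h2 : HasDerivAt h (deriv h z) z := hz.differentiableAt.hasDerivAt
      have h3 : HasDerivAt (fun w => (w - a) ^ (k - j) * h w) _ z := h1.mul h2
      rw [h3.deriv]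
      have e1 : k - j - 1 = m := by omega
      have e2 : k - (j + 1) = m := by omega
      rw [e1, e2, hm]
      push_cast
      ring

private lemma iter_deriv_of_factor {H g : ℂ → ℂ} {a : ℂ} {k : ℕ}
    (hg : AnalyticAt ℂ g a)
    (hev : ∀ᶠ z in 𝓝 a, H z = (z - a) ^ k * g z) :
    iteratedDeriv k H a = (k ! : ℂ) * g a := by
  obtain ⟨h, hh, hha, hev2⟩ := descend a k k g le_rfl hg
  have e1 : iteratedDeriv k H a = iteratedDeriv k (fun z => (z - a) ^ k * g z) a :=
    Filter.EventuallyEq.iteratedDeriv_eq k hev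
  rw [e1, hev2.eq_of_nhds]
  simp [Nat.sub_self, hha, Nat.descFactorial_self]

/-- Cauchy estimate for the `k`-th derivative. -/
private lemma coeff_bound {H : ℂ → ℂ} {a : ℂ} {r : NNReal} (hr : 0 < r)
    (hd : DifferentiableOn ℂ H (Metric.closedBall a r)) {M : ℝ}
    (hM : ∀ z ∈ Metric.closedBall a (r : ℝ), ‖H z‖ ≤ M) (k : ℕ) :
    ‖iteratedDeriv k H a‖ ≤ k ! * M / (r : ℝ) ^ k := by
  have hball := hd.hasFPowerSeriesOnBall hr
  have hfact := hball.factorial_smul (1 : ℂ) k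
  have h1 : iteratedDeriv k H a = k ! • (cauchyPowerSeries H a r k fun _ => (1 : ℂ)) := by
    rw [iteratedDeriv_eq_iteratedFDeriv, ← hfact]
  have h2 : ‖cauchyPowerSeries H a r k fun _ => (1 : ℂ)‖ ≤ ‖cauchyPowerSeries H a r k‖ := by
    simpa using (cauchyPowerSeries H a r k).le_opNorm fun _ => (1 : ℂ)
  have h3 := norm_cauchyPowerSeries_le H a r k
  have hcont : Continuous fun θ : ℝ => ‖H (circleMap a r θ)‖ :=
    (hd.continuousOn.comp_continuous (continuous_circleMap a r)
      (fun θ => circleMap_mem_closedBall a r.coe_nonneg θ)).norm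
  have hint : (∫ θ : ℝ in (0 : ℝ)..2 * Real.pi, ‖H (circleMap a r θ)‖) ≤ 2 * Real.pi * M := by
    have := intervalIntegral.integral_mono_on (μ := MeasureTheory.volume)
      (by positivity : (0 : ℝ) ≤ 2 * Real.pi)
      (hcont.intervalIntegrable 0 (2 * Real.pi)) intervalIntegrable_const
      (fun θ _ => hM _ (circleMap_mem_closedBall a r.coe_nonneg θ))
    simpa [mul_comm] using this
  have hM0 : 0 ≤ M := le_trans (norm_nonneg _) (hM a (Metric.mem_closedBall_self r.coe_nonneg))
  have hr0 : (0 : ℝ) < (r : ℝ) := hr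
  calc ‖iteratedDeriv k H a‖
      = k ! * ‖cauchyPowerSeries H a r k fun _ => (1 : ℂ)‖ := by
        rw [h1]; simp [nsmul_eq_mul, norm_mul]
    _ ≤ k ! * (((2 * Real.pi)⁻¹ * ∫ θ : ℝ in (0 : ℝ)..2 * Real.pi,
          ‖H (circleMap a r θ)‖) * |(r : ℝ)|⁻¹ ^ k) := by
        have := h2.trans h3
        gcongr
    _ ≤ k ! * (((2 * Real.pi)⁻¹ * (2 * Real.pi * M)) * |(r : ℝ)|⁻¹ ^ k) := by
        gcongr
    _ = k ! * M / (r : ℝ) ^ k := by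
        rw [abs_of_nonneg r.coe_nonneg]
        field_simp [Real.pi_ne_zero, hr0.ne']
        rw [div_pow, one_pow, mul_assoc, one_div_mul_cancel (pow_ne_zero _ hr0.ne'), mul_one]
    
/-- Cartan's uniqueness theorem: a holomorphic self-map of a bounded planar
domain with `f a = a` and `f'(a) = 1` is the identity on the domain. -/
theorem eq_id_of_deriv_eq_one (D : Set ℂ) (hO : IsOpen D) (hC : IsConnected D)
    (hB : Bornology.IsBounded D) (f : ℂ → ℂ) (hf : DifferentiableOn ℂ f D)
    (hmap : Set.MapsTo f D D) (a : ℂ) (ha : a ∈ D) (hfa : f a = a)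
    (hderiv : deriv f a = 1) : Set.EqOn f id D := by
  obtain ⟨M, hM⟩ := isBounded_iff_forall_norm_le.mp hB
  have hfan : AnalyticOnNhd ℂ f D := hf.analyticOnNhd hO
  have hdiffn : ∀ n : ℕ, DifferentiableOn ℂ (f^[n]) D := by
    intro n
    induction n with
    | zero => simpa using differentiableOn_id
    | succ n ih =>
      rw [Function.iterate_succ']
      exact hf.comp ih (hmap.iterate n)
  have hfixn : ∀ n : ℕ, f^[n] a = a := fun n => Function.iterate_fixed hfa n
  have hFa : AnalyticAt ℂ (fun z => f z - z) a := (hfan a ha).sub analyticAt_id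
  suffices hev : ∀ᶠ z in 𝓝 a, f z - z = 0 by
    have hFan : AnalyticOnNhd ℂ (fun z => f z - z) D := fun z hz => (hfan z hz).sub analyticAt_id
    have heq := hFan.eqOn_zero_of_preconnected_of_eventuallyEq_zero hC.isPreconnected ha
      (by filter_upwards [hev] with z h; simpa using h)
    intro z hz
    have h0 := heq hz
    simp only [Pi.zero_apply, sub_eq_zero] at h0
    simpa using h0
  by_contra hne
  have horder : analyticOrderAt (fun z => f z - z) a ≠ ⊤ := fun h => hne (analyticOrderAt_eq_top.mp h)
  obtain ⟨k, hk⟩ := WithTop.ne_top_iff_exists.mp horder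
  obtain ⟨g, hg, hga, hevF⟩ := (hFa.analyticOrderAt_eq_natCast (n := k)).mp hk.symm
  have hevF' : ∀ᶠ z in 𝓝 a, f z - z = (z - a) ^ k * g z := by
    simpa only [smul_eq_mul] using hevF
  have hdf : DifferentiableAt ℂ f a := hf.differentiableAt (hO.mem_nhds ha)
  have hderivF : deriv (fun z => f z - z) a = 0 := by
    have h' : HasDerivAt (fun z => f z - z) (deriv f a - 1) a :=
      hdf.hasDerivAt.sub (hasDerivAt_id a)
    rw [h'.deriv, hderiv]; ring
  have hk2 : 2 ≤ k := by
    by_contra hlt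
    push_neg at hlt
    interval_cases k
    · have h0 := hevF'.self_of_nhds
      simp [hfa] at h0
      exact hga h0.symm
    · have hGa : HasDerivAt g (deriv g a) a := hg.differentiableAt.hasDerivAt
      have hprod : HasDerivAt (fun z => (z - a) ^ 1 * g z) _ a := (((hasDerivAt_id' (x := a)).sub_const a).pow 1).mul hGa
      have hde : deriv (fun z => f z - z) a = deriv (fun z => (z - a) ^ 1 * g z) a :=
        Filter.EventuallyEq.deriv_eq hevF'
      rw [hderivF, hprod.deriv] at hde
      simp at hde
      exact hga hde.symm
  obtain ⟨m, rfl⟩ : ∃ m, k = m + 2 := ⟨k - 2, by omega⟩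
  obtain ⟨r, hr0, hrD⟩ : ∃ r : NNReal, 0 < r ∧ Metric.closedBall a (r : ℝ) ⊆ D := by
    rcases Metric.isOpen_iff.mp hO a ha with ⟨ε, hε, hball⟩
    refine ⟨⟨ε / 2, by positivity⟩, NNReal.coe_pos.mp (by positivity : (0 : ℝ) < ε / 2),
      (Metric.closedBall_subset_ball ?_).trans hball⟩
    show ε / 2 < ε
    linarith
  have key : ∀ n : ℕ, ∃ gn : ℂ → ℂ, AnalyticAt ℂ gn a ∧ gn a = n * g a ∧
      ∀ᶠ z in 𝓝 a, f^[n] z - z = (z - a) ^ (m + 2) * gn z := by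
    intro n
    induction n with
    | zero => exact ⟨fun _ => 0, analyticAt_const, by simp, by simp⟩
    | succ n ih =>
      obtain ⟨gn, hgn, hgna, hevn⟩ := ih
      have hcn : ContinuousAt (f^[n]) a :=
        ((hdiffn n).differentiableAt (hO.mem_nhds ha)).continuousAt
      have hpull : ∀ᶠ z in 𝓝 a,
          f (f^[n] z) - f^[n] z = (f^[n] z - a) ^ (m + 2) * g (f^[n] z) := by
        have ht : Tendsto (f^[n]) (𝓝 a) (𝓝 a) := by
          simpa [hfixn n] using hcn.tendsto
        exact ht.eventually hevF'
      refine ⟨fun z => gn z + (1 + (z - a) ^ (m + 1) * gn z) ^ (m + 2) * g (f^[n] z), ?_, ?_, ?_⟩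
      · have hfn : AnalyticAt ℂ (f^[n]) a := ((hdiffn n).analyticOnNhd hO) a ha
        have hgc : AnalyticAt ℂ (fun z => g (f^[n] z)) a := by
          have hga' : AnalyticAt ℂ g (f^[n] a) := by rw [hfixn n]; exact hg
          exact hga'.comp hfn
        exact hgn.add
          (((analyticAt_const.add
            (((analyticAt_id.sub analyticAt_const).pow _).mul hgn)).pow _).mul hgc)
      · simp [hgna, hfixn n]
        push_cast
        ring
      · filter_upwards [hevn, hpull] with z h1 h2
        have hiter : f^[n + 1] z = f (f^[n] z) := Function.iterate_succ_apply' f n z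
        rw [hiter]
        have hfz2 : f^[n] z - a = (z - a) * (1 + (z - a) ^ (m + 1) * gn z) := by
          have hzf : f^[n] z = z + (z - a) ^ (m + 2) * gn z := by linear_combination h1
          rw [hzf]; ring
        set w := 1 + (z - a) ^ (m + 1) * gn z with hw
        calc f (f^[n] z) - z
            = (f^[n] z - a) ^ (m + 2) * g (f^[n] z) + (f^[n] z - z) := by linear_combination h2
          _ = ((z - a) * w) ^ (m + 2) * g (f^[n] z)
              + (z - a) ^ (m + 2) * gn z := by rw [hfz2, h1]
          _ = (z - a) ^ (m + 2) * w ^ (m + 2) * g (f^[n] z)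
              + (z - a) ^ (m + 2) * gn z := by rw [mul_pow]
          _ = (z - a) ^ (m + 2) * (gn z + w ^ (m + 2) * g (f^[n] z)) := by ring
  have hbound : ∀ n : ℕ, (n : ℝ) * ‖g a‖ ≤ (M + M) / (r : ℝ) ^ (m + 2) := by
    intro n
    obtain ⟨gn, hgn, hgna, hevn⟩ := key n
    have hd : DifferentiableOn ℂ (fun z => f^[n] z - z) (Metric.closedBall a r) :=
      ((hdiffn n).sub differentiableOn_id).mono hrD
    have hMb : ∀ z ∈ Metric.closedBall a (r : ℝ), ‖f^[n] z - z‖ ≤ M + M := by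
      intro z hz
      have hzD := hrD hz
      exact (norm_sub_le _ _).trans (add_le_add (hM _ ((hmap.iterate n) hzD)) (hM _ hzD))
    have hiter : iteratedDeriv (m + 2) (fun z => f^[n] z - z) a = ((m + 2)! : ℂ) * gn a :=
      iter_deriv_of_factor hgn hevn
    have hcb := coeff_bound hr0 hd hMb (m + 2)
    rw [hiter, hgna] at hcb
    have hnorm : ‖((m + 2)! : ℂ) * ((n : ℂ) * g a)‖
        = ((m + 2)! : ℝ) * ((n : ℝ) * ‖g a‖) := by
      simp [norm_mul]
    rw [hnorm] at hcb
    have hfactpos : (0 : ℝ) < (m + 2)! := by positivity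
    have hrpos : (0 : ℝ) < (r : ℝ) ^ (m + 2) := by positivity
    calc (n : ℝ) * ‖g a‖
        = ((m + 2)! * ((n : ℝ) * ‖g a‖)) / (m + 2)! := by field_simp
      _ ≤ ((m + 2)! * (M + M) / (r : ℝ) ^ (m + 2)) / (m + 2)! := by gcongr
      _ = (M + M) / (r : ℝ) ^ (m + 2) := by field_simp
  have hga' : 0 < ‖g a‖ := norm_pos_iff.mpr hga
  obtain ⟨n, hn⟩ := exists_nat_gt ((M + M) / (r : ℝ) ^ (m + 2) / ‖g a‖)
  have hb := hbound n
  rw [div_lt_iff₀ hga'] at hn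
  linarith
end

section
/- Let D ⊆ ℂ be a bounded domain and a ∈ D. The map sending an automorphism f of D fixing a to its derivative f'(a) ∈ ℂ is an injective group homomorphism from the isotropy group Iso_a(D) into the circle group {z ∈ ℂ : |z| = 1}. -/
/-- `f` is a (conformal) automorphism of the planar domain `D`. -/
def IsAut (D : Set ℂ) (f : ℂ → ℂ) : Prop :=
  DifferentiableOn ℂ f D ∧ Set.MapsTo f D D ∧ Set.BijOn f D D ∧
    ∃ g : ℂ → ℂ, DifferentiableOn ℂ g D ∧ Set.MapsTo g D D ∧
      (∀ z ∈ D, g (f z) = z) ∧ (∀ z ∈ D, f (g z) = z)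

open Metric Set Filter Function Topology

private lemma iterate_diff' {D : Set ℂ} {h : ℂ → ℂ} (hd : DifferentiableOn ℂ h D)
    (hm : Set.MapsTo h D D) : ∀ j, DifferentiableOn ℂ h^[j] D
  | 0 => differentiableOn_id
  | (j+1) => by
      rw [Function.iterate_succ']
      exact hd.comp (iterate_diff' hd hm j) (hm.iterate j)

private lemma cartan {D : Set ℂ} (hO : IsOpen D) (hC : IsConnected D)
    (hB : Bornology.IsBounded D) {a : ℂ} (ha : a ∈ D) {h : ℂ → ℂ}
    (hd : DifferentiableOn ℂ h D) (hm : Set.MapsTo h D D) (hfix : h a = a)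
    (hder : deriv h a = 1) : Set.EqOn h id D := by
  have hha : AnalyticAt ℂ h a := hd.analyticAt (hO.mem_nhds ha)
  have hHa : AnalyticAt ℂ (fun z => h z - z) a := by
    exact hha.sub analyticAt_id
  by_cases htop : analyticOrderAt (fun z => h z - z) a = ⊤
  · have hev : ∀ᶠ z in 𝓝 a, h z - z = 0 := analyticOrderAt_eq_top.mp htop
    have heq : h =ᶠ[𝓝 a] id := hev.mono fun z hz => by
      simpa [sub_eq_zero] using hz
    exact (hd.analyticOnNhd hO).eqOn_of_preconnected_of_eventuallyEq
      (fun z _ => analyticAt_id) hC.isPreconnected ha heq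
  · exfalso
    obtain ⟨n, hn⟩ : ∃ n : ℕ, analyticOrderAt (fun z => h z - z) a = n := by
      lift analyticOrderAt (fun z => h z - z) a to ℕ using htop with n hn
      exact ⟨n, rfl⟩
    obtain ⟨g, hg, hga, hev⟩ := (hHa.analyticOrderAt_eq_natCast).mp hn
    have hev' : ∀ᶠ z in 𝓝 a, h z - z = (z - a) ^ n * g z := by
      simpa [smul_eq_mul] using hev
    have hdiffat : DifferentiableAt ℂ h a := hd.differentiableAt (hO.mem_nhds ha)
    -- n ≥ 2
    have hn0 : n ≠ 0 := by
      rintro rfl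
      have := hev'.self_of_nhds
      simp [hfix] at this
      exact hga this.symm
    have hn1 : n ≠ 1 := by
      rintro rfl
      have hd0 : deriv (fun z => h z - z) a = 0 := by
        rw [deriv_fun_sub hdiffat differentiableAt_fun_id]
        simp [hder]
      have hdR : HasDerivAt (fun z => (z - a) ^ 1 * g z)
          (1 * g a + (a - a) ^ 1 * deriv g a) a := by
        simpa using (((hasDerivAt_id a).sub_const a).fun_pow 1).fun_mul
          hg.differentiableAt.hasDerivAt
      have := (Filter.EventuallyEq.deriv_eq (hev' : (fun z => h z - z) =ᶠ[𝓝 a] fun z => (z - a) ^ 1 * g z)).trans hdR.deriv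
      rw [hd0] at this
      apply hga
      simpa using this.symm
    have hn2 : 2 ≤ n := by omega
    have hmj : ∀ j, Set.MapsTo h^[j] D D := fun j => hm.iterate j
    have hdj : ∀ j, DifferentiableOn ℂ h^[j] D := iterate_diff' hd hm
    have key : ∀ j : ℕ, Tendsto (fun z => (h^[j] z - z) / (z - a) ^ n)
        (𝓝[≠] a) (𝓝 ((j : ℂ) * g a)) := by
      intro j
      induction j with
      | zero =>
        simp only [Function.iterate_zero, id_eq, sub_self, zero_div,
          Nat.cast_zero, zero_mul]
        exact tendsto_const_nhds
      | succ j ih =>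
        have hfa : h^[j] a = a := Function.iterate_fixed hfix j
        have hcj : ContinuousAt h^[j] a :=
          ((hdj j).differentiableAt (hO.mem_nhds ha)).continuousAt
        have htj : Tendsto h^[j] (𝓝[≠] a) (𝓝 a) := by
          have := hcj.tendsto
          rw [hfa] at this
          exact this.mono_left nhdsWithin_le_nhds
        have hpow0 : Tendsto (fun z : ℂ => (z - a) ^ (n - 1)) (𝓝[≠] a) (𝓝 0) := by
          have h1 : Tendsto (fun z : ℂ => z - a) (𝓝 a) (𝓝 0) := by
            have := ((continuous_id.sub (continuous_const (y := a))).tendsto a)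
            simpa using (continuous_sub_right a).tendsto a
          have h2 := h1.pow (n - 1)
          rw [zero_pow (by omega : n - 1 ≠ 0)] at h2
          exact h2.mono_left nhdsWithin_le_nhds
        have hratio : Tendsto (fun z => (h^[j] z - a) / (z - a)) (𝓝[≠] a) (𝓝 1) := by
          have h1 : Tendsto (fun z => (z - a) ^ (n - 1) * ((h^[j] z - z) / (z - a) ^ n) + 1)
              (𝓝[≠] a) (𝓝 1) := by
            have := (hpow0.mul ih).add (tendsto_const_nhds (x := (1 : ℂ)))
            simpa using this
          apply h1.congr'
          filter_upwards [self_mem_nhdsWithin] with z hz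
          have hza : z - a ≠ 0 := sub_ne_zero.mpr hz
          have e1 : (z - a) ^ n = (z - a) ^ (n - 1) * (z - a) := by
            rw [← pow_succ]
            congr 1
            omega
          rw [e1]
          field_simp
          ring
        have hgt : Tendsto (fun z => g (h^[j] z)) (𝓝[≠] a) (𝓝 (g a)) :=
          hg.continuousAt.tendsto.comp htj
        have main : Tendsto
            (fun z => ((h^[j] z - a) / (z - a)) ^ n * g (h^[j] z) + (h^[j] z - z) / (z - a) ^ n)
            (𝓝[≠] a) (𝓝 ((1 : ℂ) ^ n * g a + (j : ℂ) * g a)) :=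
          ((hratio.pow n).mul hgt).add ih
        have hevc : ∀ᶠ z in 𝓝[≠] a,
            h (h^[j] z) - h^[j] z = (h^[j] z - a) ^ n * g (h^[j] z) :=
          htj.eventually hev'
        have heq2 : ∀ᶠ z in 𝓝[≠] a,
            ((h^[j] z - a) / (z - a)) ^ n * g (h^[j] z) + (h^[j] z - z) / (z - a) ^ n
              = (h^[j + 1] z - z) / (z - a) ^ n := by
          filter_upwards [hevc, self_mem_nhdsWithin] with z hz hza'
          have hza : (z - a) ≠ 0 := sub_ne_zero.mpr hza'
          rw [Function.iterate_succ_apply']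
          have hnum : h (h^[j] z) - z = (h^[j] z - a) ^ n * g (h^[j] z) + (h^[j] z - z) := by
            rw [← hz]
            ring
          rw [hnum, div_pow, div_mul_eq_mul_div, ← add_div]
        have hfinal := main.congr' heq2
        convert hfinal using 2
        push_cast
        ring
    -- radii
    obtain ⟨r, hr0, hrD⟩ := Metric.isOpen_iff.mp hO a ha
    obtain ⟨R, hDR⟩ := hB.subset_ball a
    set R' := max R r with hR'
    have hDR' : D ⊆ ball a R' := hDR.trans (ball_subset_ball (le_max_left _ _))
    have hrR' : r ≤ R' := le_max_right _ _
    set s := r / 2 with hs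
    have hs0 : 0 < s := by positivity
    have hsr : s < r := by
      rw [hs]
      linarith
    have bound : ∀ j : ℕ, (j : ℝ) * ‖g a‖ ≤ (R' + R') / s ^ n := by
      intro j
      set G : ℂ → ℂ := fun z => if z = a then (j : ℂ) * g a else (h^[j] z - z) / (z - a) ^ n
        with hG
      have hGrat : ∀ z : ℂ, z ≠ a → G z = (h^[j] z - z) / (z - a) ^ n := fun z hz => if_neg hz
      have hGa : G a = (j : ℂ) * g a := if_pos rfl
      have hGdiff : DifferentiableOn ℂ G (ball a r) := by
        rw [← Complex.differentiableOn_compl_singleton_and_continuousAt_iff (ball_mem_nhds a hr0)]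
        constructor
        · have hrat : DifferentiableOn ℂ (fun z => (h^[j] z - z) / (z - a) ^ n)
              (ball a r \ {a}) := by
            apply DifferentiableOn.div
            · exact (((hdj j).mono hrD).mono diff_subset).sub differentiableOn_id
            · exact (differentiableOn_id.sub (differentiableOn_const a)).pow n
            · intro z hz
              exact pow_ne_zero n (sub_ne_zero.mpr hz.2)
          exact hrat.congr fun z hz => hGrat z hz.2
        · have h1 : Tendsto G (𝓝[≠] a) (𝓝 ((j : ℂ) * g a)) := by
            apply (key j).congr'
            filter_upwards [self_mem_nhdsWithin] with z hz
            exact (hGrat z hz).symm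
          rw [← continuousWithinAt_compl_self]
          unfold ContinuousWithinAt
          rw [hGa]
          exact h1
      have hGdc : DiffContOnCl ℂ G (ball a s) := by
        apply DifferentiableOn.diffContOnCl
        rw [closure_ball a hs0.ne']
        exact hGdiff.mono (closedBall_subset_ball hsr)
      have hfront : ∀ z ∈ frontier (ball a s), ‖G z‖ ≤ (R' + R') / s ^ n := by
        rw [frontier_ball a hs0.ne']
        intro z hz
        have hdist : dist z a = s := mem_sphere.mp hz
        have hzne : z ≠ a := by
          intro e
          rw [e, dist_self] at hdist
          exact hs0.ne hdist
        have hzD : z ∈ D := hrD (by rw [mem_ball, hdist]; exact hsr)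
        have hnorm : ‖z - a‖ = s := by rwa [← dist_eq_norm]
        rw [hGrat z hzne, norm_div, norm_pow, hnorm]
        have h1 : ‖h^[j] z - a‖ < R' := by
          have := hDR' (hmj j hzD)
          rwa [mem_ball, dist_eq_norm] at this
        have h2 : ‖h^[j] z - z‖ ≤ R' + R' := by
          calc ‖h^[j] z - z‖ = ‖(h^[j] z - a) + (a - z)‖ := by ring_nf
            _ ≤ ‖h^[j] z - a‖ + ‖a - z‖ := norm_add_le _ _
            _ ≤ R' + R' := by
                have : ‖a - z‖ = s := by rwa [norm_sub_rev] at hnorm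
                rw [this]
                have : s ≤ R' := le_of_lt (lt_of_lt_of_le hsr hrR')
                linarith
        apply div_le_div_of_nonneg_right h2 ?_ |>.trans_eq ?_ <;> try positivity
        rfl
      have hmem : a ∈ closure (ball a s) := subset_closure (mem_ball_self hs0)
      have hfin := Complex.norm_le_of_forall_mem_frontier_norm_le isBounded_ball hGdc hfront hmem
      rw [hGa] at hfin
      calc (j : ℝ) * ‖g a‖ = ‖(j : ℂ) * g a‖ := by
            rw [norm_mul, Complex.norm_natCast]
        _ ≤ (R' + R') / s ^ n := hfin
    have hga0 : 0 < ‖g a‖ := norm_pos_iff.mpr hga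
    obtain ⟨j, hj⟩ := exists_nat_gt (((R' + R') / s ^ n) / ‖g a‖)
    have h1 := bound j
    have h2 : (j : ℝ) ≤ ((R' + R') / s ^ n) / ‖g a‖ := (le_div_iff₀ hga0).mpr h1
    linarith
private lemma aux_deriv_le_one {D : Set ℂ} (hO : IsOpen D) (hB : Bornology.IsBounded D)
    {a : ℂ} (ha : a ∈ D) {f : ℂ → ℂ} (hd : DifferentiableOn ℂ f D)
    (hm : Set.MapsTo f D D) (hfix : f a = a) : ‖deriv f a‖ ≤ 1 := by
  obtain ⟨r, hr0, hrD⟩ := Metric.isOpen_iff.mp hO a ha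
  obtain ⟨R, hDR⟩ := hB.subset_ball a
  set R' := max R r with hR'
  have hDR' : D ⊆ ball a R' := hDR.trans (ball_subset_ball (le_max_left _ _))
  have hderiter : ∀ j, deriv f^[j] a = (deriv f a) ^ j := by
    intro j; induction j with
    | zero => simp
    | succ j ih =>
      have hfa : f^[j] a = a := Function.iterate_fixed hfix j
      rw [Function.iterate_succ',
        deriv_comp a (by rw [hfa]; exact hd.differentiableAt (hO.mem_nhds ha))
          ((iterate_diff' hd hm j).differentiableAt (hO.mem_nhds ha)), hfa, ih]
      ring
  have hb : ∀ j, ‖deriv f^[j] a‖ ≤ R' / r := by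
    intro j
    have h1 : DifferentiableOn ℂ f^[j] (ball a r) := (iterate_diff' hd hm j).mono hrD
    have h2 : Set.MapsTo f^[j] (ball a r) (ball (f^[j] a) R') := by
      rw [Function.iterate_fixed hfix j]
      exact fun z hz => hDR' (hm.iterate j (hrD hz))
    exact Complex.norm_deriv_le_div_of_mapsTo_ball h1 (h2.mono_right ball_subset_closedBall) hr0
  by_contra hcon
  push_neg at hcon
  obtain ⟨j, hj⟩ := pow_unbounded_of_one_lt (R' / r) hcon
  have := hb j
  rw [hderiter j, norm_pow] at this
  linarith

private lemma inv_deriv_mul {D : Set ℂ} (hO : IsOpen D) {a : ℂ} (ha : a ∈ D)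
    {f g : ℂ → ℂ} (hfd : DifferentiableOn ℂ f D) (hgd : DifferentiableOn ℂ g D)
    (hgl : ∀ z ∈ D, g (f z) = z) (hfix : f a = a) :
    deriv g a * deriv f a = 1 := by
  have hev : (fun z => g (f z)) =ᶠ[𝓝 a] id := by
    filter_upwards [hO.mem_nhds ha] with z hz
    exact hgl z hz
  have hde : deriv (fun z => g (f z)) a = 1 := by
    rw [Filter.EventuallyEq.deriv_eq hev, deriv_id]
  rw [← hde, show (fun z => g (f z)) = g ∘ f from rfl,
    deriv_comp a (by rw [hfix]; exact hgd.differentiableAt (hO.mem_nhds ha))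
      (hfd.differentiableAt (hO.mem_nhds ha)), hfix]

/-- For a bounded planar domain `D` and `a ∈ D`, the map `f ↦ f'(a)` from the
isotropy group of automorphisms fixing `a` into the circle group is an
injective group homomorphism: it takes values of modulus one, it is
multiplicative with respect to composition, and it is injective. -/
theorem isotropy_deriv_injective_hom (D : Set ℂ) (hO : IsOpen D)
    (hC : IsConnected D) (hB : Bornology.IsBounded D) (a : ℂ) (ha : a ∈ D) :
    (∀ f : ℂ → ℂ, IsAut D f → f a = a → ‖deriv f a‖ = 1) ∧
    (∀ f g : ℂ → ℂ, IsAut D f → IsAut D g → f a = a → g a = a →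
      deriv (f ∘ g) a = deriv f a * deriv g a) ∧
    (∀ f g : ℂ → ℂ, IsAut D f → IsAut D g → f a = a → g a = a →
      deriv f a = deriv g a → Set.EqOn f g D) := by
  have habs : ∀ f : ℂ → ℂ, IsAut D f → f a = a → ‖deriv f a‖ = 1 := by
    rintro f ⟨hfd, hfm, hfbij, g, hgd, hgm, hgl, hgr⟩ hfix
    have h1 := aux_deriv_le_one hO hB ha hfd hfm hfix
    have hga : g a = a := by
      calc g a = g (f a) := by rw [hfix]
        _ = a := hgl a ha
    have h2 := aux_deriv_le_one hO hB ha hgd hgm hga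
    have hcomp := inv_deriv_mul hO ha hfd hgd hgl hfix
    have h3 : ‖deriv g a‖ * ‖deriv f a‖ = 1 := by
      rw [← norm_mul, hcomp, norm_one]
    have h4 := norm_nonneg (deriv f a)
    have h5 := norm_nonneg (deriv g a)
    nlinarith
  refine ⟨habs, ?_, ?_⟩
  · rintro f g ⟨hfd, hfm, -⟩ ⟨hgd, hgm, -⟩ hfa hga
    rw [deriv_comp a (by rw [hga]; exact hfd.differentiableAt (hO.mem_nhds ha))
      (hgd.differentiableAt (hO.mem_nhds ha)), hga]
  · rintro f g hf hg hfa hga hder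
    have habsg := habs g hg hga
    obtain ⟨hfd, hfm, hfbij, -⟩ := hf
    obtain ⟨hgd, hgm, hgbij, gi, hgid, hgim, hgil, hgir⟩ := hg
    have hgia : gi a = a := by
      calc gi a = gi (g a) := by rw [hga]
        _ = a := hgil a ha
    have hgider := inv_deriv_mul hO ha hgd hgid hgil hga
    have hcd : DifferentiableOn ℂ (gi ∘ f) D := hgid.comp hfd hfm
    have hcm : Set.MapsTo (gi ∘ f) D D := hgim.comp hfm
    have hcfix : (gi ∘ f) a = a := by simp [Function.comp, hfa, hgia]
    have hgne : deriv g a ≠ 0 := by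
      intro e
      rw [e] at habsg
      simp at habsg
    have hcder : deriv (gi ∘ f) a = 1 := by
      rw [deriv_comp a (by rw [hfa]; exact hgid.differentiableAt (hO.mem_nhds ha))
        (hfd.differentiableAt (hO.mem_nhds ha)), hfa, hder]
      exact hgider
    have hEq := cartan hO hC hB ha hcd hcm hcfix hcder
    intro z hz
    have h1 : gi (f z) = z := hEq hz
    calc f z = g (gi (f z)) := (hgir (f z) (hfm hz)).symm
      _ = g z := by rw [h1]
end
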